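/- Assume additionally ρ(P) < 1. Let z ∈ ℝ^S with z ≥ 0 and define w^t := −B^t z − ∑_{k=0}^{t−1} B^k b for t ∈ ℕ. If liminf_{t→∞} (w^t)_s > −∞ for every s ∈ S, then ρ(B) < 1. -/

import Mathlib

open Matrix Filter Topology ENNReal NNReal

/-- Spectral radius of a real square matrix: the maximum modulus of its complex eigenvalues. -/
noncomputable def specRad {S : Type*} [Fintype S] [DecidableEq S] (M : Matrix S S ℝ) : ℝ :=
  sSup ((fun z : ℂ => ‖z‖) '' spectrum ℂ (M.map Complex.ofReal))

section Spectral
variable {S : Type*} [Fintype S] [DecidableEq S] [Nonempty S]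

attribute [local instance] Matrix.linftyOpNormedAddCommGroup Matrix.linftyOpNormedRing
  Matrix.linftyOpNormedAlgebra

example : CompleteSpace (Matrix S S ℂ) := by exact FiniteDimensional.complete ℂ _

-- eigenvector existence
lemma exists_eigvec (M : Matrix S S ℝ) {lam : ℂ} (h : lam ∈ spectrum ℂ (M.map Complex.ofReal)) :
    ∃ v : S → ℂ, v ≠ 0 ∧ (M.map Complex.ofReal) *ᵥ v = lam • v := by
  rw [spectrum.mem_iff] at h
  rw [Matrix.isUnit_iff_isUnit_det, isUnit_iff_ne_zero, not_not] at h
  obtain ⟨v, hv, hMv⟩ := (Matrix.exists_mulVec_eq_zero_iff).2 h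
  refine ⟨v, hv, ?_⟩
  have := congrArg (fun w => (M.map Complex.ofReal) *ᵥ v + w - ((algebraMap ℂ (Matrix S S ℂ)) lam - M.map Complex.ofReal) *ᵥ v) hMv
  -- simpler: expand sub_mulVec
  rw [Matrix.sub_mulVec] at hMv
  have h2 : (algebraMap ℂ (Matrix S S ℂ)) lam *ᵥ v = lam • v := by
    rw [Algebra.algebraMap_eq_smul_one, Matrix.smul_mulVec, Matrix.one_mulVec]
  rw [h2, sub_eq_zero] at hMv
  exact hMv.symm

set_option linter.unusedSectionVars false

lemma specRad_lt_one_of_entries (M : Matrix S S ℝ)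
    (h : ∀ i j, Tendsto (fun k => (M ^ k) i j) atTop (𝓝 0)) : specRad M < 1 := by
  classical
  set M' := M.map Complex.ofReal with hM'
  have hcs : IsCompact (spectrum ℂ M') := spectrum.isCompact M'
  have hne : (spectrum ℂ M').Nonempty := spectrum.nonempty M'
  have himc : IsCompact ((fun z : ℂ => ‖z‖) '' spectrum ℂ M') :=
    hcs.image continuous_norm
  have himne : ((fun z : ℂ => ‖z‖) '' spectrum ℂ M').Nonempty := hne.image _
  have hmem := himc.sSup_mem himne
  obtain ⟨lam, hlam, hlameq⟩ := hmem
  rw [specRad, ← hM', ← hlameq]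
  -- get eigenvector
  obtain ⟨v, hv0, hvec⟩ := exists_eigvec M hlam
  have hpowvec : ∀ k : ℕ, (M' ^ k) *ᵥ v = lam ^ k • v := by
    intro k
    induction k with
    | zero => simp
    | succ k ih =>
      rw [pow_succ, ← Matrix.mulVec_mulVec, hvec, Matrix.mulVec_smul, ih, smul_smul]
      rw [pow_succ, mul_comm]
  -- pick coordinate with v i ≠ 0
  obtain ⟨i, hvi⟩ : ∃ i, v i ≠ 0 := Function.ne_iff.mp hv0
  have hent : ∀ j l, Tendsto (fun k => (M' ^ k) j l) atTop (𝓝 0) := by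
    intro j l
    have hmp : ∀ k : ℕ, (M' ^ k) j l = Complex.ofReal ((M ^ k) j l) := by
      intro k
      have : M' ^ k = (M ^ k).map Complex.ofReal := by
        rw [hM']
        exact (map_pow (Complex.ofRealHom.mapMatrix) M k).symm
      rw [this, Matrix.map_apply]
    simp_rw [hmp]
    have := (Complex.continuous_ofReal.tendsto 0).comp (h j l)
    simpa [Function.comp_def] using this
  have hlim : Tendsto (fun k : ℕ => lam ^ k * v i) atTop (𝓝 0) := by
    have h1 : ∀ k : ℕ, lam ^ k * v i = ((M' ^ k) *ᵥ v) i := by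
      intro k; rw [hpowvec k]; simp [Pi.smul_apply, smul_eq_mul]
    simp_rw [h1, Matrix.mulVec, dotProduct]
    have : Tendsto (fun k : ℕ => ∑ j, (M' ^ k) i j * v j) atTop (𝓝 (∑ j : S, 0 * v j)) := by
      exact tendsto_finset_sum _ fun j _ => (hent i j).mul tendsto_const_nhds
    simpa using this
  have hlam2 : Tendsto (fun k : ℕ => lam ^ k) atTop (𝓝 0) := by
    have := hlim.mul_const (v i)⁻¹
    simpa [mul_assoc, mul_inv_cancel₀ hvi] using this
  have habs : Tendsto (fun k : ℕ => ‖lam‖ ^ k) atTop (𝓝 0) := by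
    have := (continuous_norm.tendsto 0).comp hlam2
    simpa [Function.comp_def, norm_pow] using this
  have := tendsto_pow_atTop_nhds_zero_iff.mp habs
  calc ‖lam‖ = |‖lam‖| := (abs_of_nonneg (norm_nonneg lam)).symm
    _ < 1 := this

lemma entries_tendsto_zero_of_specRad (M : Matrix S S ℝ) (h : specRad M < 1) :
    ∀ i j, Tendsto (fun k => (M ^ k) i j) atTop (𝓝 0) := by
  classical
  set M' := M.map Complex.ofReal with hM'
  have hcs : IsCompact (spectrum ℂ M') := spectrum.isCompact M'
  have hbdd : BddAbove ((fun z : ℂ => ‖z‖) '' spectrum ℂ M') :=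
    (hcs.image continuous_norm).bddAbove
  -- spectralRadius < 1
  have hsr : spectralRadius ℂ M' < 1 := by
    have : spectralRadius ℂ M' < ((1 : NNReal) : ℝ≥0∞) := by
      apply spectrum.spectralRadius_lt_of_forall_lt
      intro z hz
      have h1 : ‖z‖ ≤ specRad M :=
        le_csSup hbdd ⟨z, hz, rfl⟩
      have : ‖z‖ < 1 := lt_of_le_of_lt h1 h
      simpa [← NNReal.coe_lt_coe] using this
    simpa using this
  -- Gelfand
  have hG := spectrum.pow_nnnorm_pow_one_div_tendsto_nhds_spectralRadius M'
  obtain ⟨r, hr1, hr2⟩ := ENNReal.lt_iff_exists_nnreal_btwn.mp hsr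
  have hev : ∀ᶠ n : ℕ in atTop, (‖M' ^ n‖₊ : ℝ≥0∞) ^ (1 / (n : ℝ)) < (r : ℝ≥0∞) :=
    hG.eventually_lt_const hr1
  have hr1' : (r : ℝ) < 1 := by exact_mod_cast hr2
  have hnorm : ∀ᶠ n : ℕ in atTop, ‖M' ^ n‖ ≤ (r : ℝ) ^ n := by
    filter_upwards [hev, eventually_ge_atTop 1] with n hn hn1
    have hne : (n : ℝ) ≠ 0 := by positivity
    have h1 : (‖M' ^ n‖₊ : ℝ≥0∞) ≤ (r : ℝ≥0∞) ^ n := by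
      have := ENNReal.rpow_le_rpow hn.le (by positivity : (0:ℝ) ≤ (n : ℝ))
      rwa [← ENNReal.rpow_mul, one_div, inv_mul_cancel₀ hne, ENNReal.rpow_one,
        ENNReal.rpow_natCast] at this
    rw [← ENNReal.coe_pow, ENNReal.coe_le_coe] at h1
    exact_mod_cast h1
  intro i j
  apply squeeze_zero_norm' _ (tendsto_pow_atTop_nhds_zero_of_lt_one r.coe_nonneg hr1')
  filter_upwards [hnorm] with n hn
  have hentry : ‖(M' ^ n) i j‖₊ ≤ ‖M' ^ n‖₊ := by
    rw [Matrix.linfty_opNNNorm_def]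
    calc ‖(M' ^ n) i j‖₊ ≤ ∑ l, ‖(M' ^ n) i l‖₊ :=
          Finset.single_le_sum (f := fun l => ‖(M' ^ n) i l‖₊) (fun l _ => by positivity) (Finset.mem_univ j)
      _ ≤ _ := Finset.le_sup (f := fun i => ∑ l, ‖(M' ^ n) i l‖₊) (Finset.mem_univ i)
  have hmp : (M' ^ n) i j = Complex.ofReal ((M ^ n) i j) := by
    have : M' ^ n = (M ^ n).map Complex.ofReal := by
      rw [hM']; exact (map_pow (Complex.ofRealHom.mapMatrix) M n).symm
    rw [this, Matrix.map_apply]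
  have : ‖(M ^ n) i j‖ = ‖(M' ^ n) i j‖ := by rw [hmp, Complex.norm_real]
  rw [this]
  exact le_trans hentry hn

end Spectral

section Helpers
variable {S : Type*} [Fintype S] [DecidableEq S]

lemma pow_entry_nonneg (M : Matrix S S ℝ) (h : ∀ i j, 0 ≤ M i j) (k : ℕ) :
    ∀ i j, 0 ≤ (M ^ k) i j := by
  induction k with
  | zero => intro i j; by_cases hij : i = j <;> simp [Matrix.one_apply, hij]
  | succ k ih =>
    intro i j
    rw [pow_succ, Matrix.mul_apply]
    exact Finset.sum_nonneg fun l _ => mul_nonneg (ih i l) (h l j)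

lemma pow_entrywise_le {A C : Matrix S S ℝ} (hA : ∀ i j, 0 ≤ A i j)
    (hAC : ∀ i j, A i j ≤ C i j) (k : ℕ) : ∀ i j, (A ^ k) i j ≤ (C ^ k) i j := by
  induction k with
  | zero => intro i j; simp
  | succ k ih =>
    intro i j
    rw [pow_succ, pow_succ, Matrix.mul_apply, Matrix.mul_apply]
    refine Finset.sum_le_sum fun l _ => ?_
    exact mul_le_mul (ih i l) (hAC l j) (hA l j) (le_trans (pow_entry_nonneg A hA k i l) (ih i l))

end Helpers

set_option maxHeartbeats 1000000 in
theorem stmt3 {S : Type*} [Fintype S] [DecidableEq S] [Nonempty S]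
    (P B : Matrix S S ℝ) (b : S → ℝ) (cl cu : ℝ)
    (hPnn : ∀ s s', 0 ≤ P s s')
    (hP1 : ∀ s, (P *ᵥ fun _ => (1 : ℝ)) s ≤ 1)
    (hcl : 0 < cl) (hclcu : cl ≤ cu)
    (hBnn : ∀ s s', 0 ≤ B s s')
    (hBl : ∀ s s', cl * P s s' ≤ B s s')
    (hBu : ∀ s s', B s s' ≤ cu * P s s')
    (hbl : ∀ s, cl * ((((1 : Matrix S S ℝ) - P) *ᵥ fun _ => (1 : ℝ)) s) ≤ b s)
    (hbu : ∀ s, b s ≤ cu * ((((1 : Matrix S S ℝ) - P) *ᵥ fun _ => (1 : ℝ)) s))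
    (hρP : specRad P < 1)
    (z : S → ℝ) (hz : ∀ s, 0 ≤ z s)
    (hbdd : ∀ s, (⊥ : EReal) <
      Filter.liminf
        (fun t => (((-((B ^ t) *ᵥ z) - ∑ k ∈ Finset.range t, (B ^ k) *ᵥ b) s : ℝ) : EReal))
        Filter.atTop) :
    specRad B < 1 := by
  classical
  set q : S → ℝ := (((1 : Matrix S S ℝ) - P) *ᵥ fun _ => (1 : ℝ)) with hqdef
  have hq0 : ∀ s, 0 ≤ q s := by
    intro s
    have : q s = 1 - (P *ᵥ fun _ => (1 : ℝ)) s := by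
      simp [hqdef, Matrix.sub_mulVec, Matrix.one_mulVec]
    rw [this]
    linarith [hP1 s]
  have hb0 : ∀ s, 0 ≤ b s := fun s =>
    le_trans (mul_nonneg hcl.le (hq0 s)) (hbl s)
  have hBkb : ∀ k s, 0 ≤ ((B ^ k) *ᵥ b) s := by
    intro k s
    rw [Matrix.mulVec, dotProduct]
    exact Finset.sum_nonneg fun j _ => mul_nonneg (pow_entry_nonneg B hBnn k s j) (hb0 j)
  -- summability of the series in each coordinate
  have hsum : ∀ s, Summable fun k => ((B ^ k) *ᵥ b) s := by
    intro s
    have hL := hbdd s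
    -- bounded partial sums
    set g : ℕ → ℝ := fun t => ∑ k ∈ Finset.range t, ((B ^ k) *ᵥ b) s with hg
    have hgmono : Monotone g := by
      intro t t' htt'
      exact Finset.sum_le_sum_of_subset_of_nonneg (Finset.range_subset_range.2 htt')
        (fun k _ _ => hBkb k s)
    have hBA : BddAbove (Set.range g) := by
      by_contra hnb
      have hgtop : Tendsto g atTop atTop := tendsto_atTop_atTop_of_monotone' hgmono hnb
      have hng : Tendsto (fun t => -g t) atTop atBot := tendsto_neg_atBot_iff.mpr hgtop
      have hcoe : Tendsto (fun t => ((-g t : ℝ) : EReal)) atTop (𝓝 ⊥) := by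
        rw [EReal.tendsto_nhds_bot_iff_real]
        intro x
        filter_upwards [hng.eventually (eventually_lt_atBot x)] with t ht
        exact_mod_cast ht
      have hle : ∀ t, (fun t => (((-((B ^ t) *ᵥ z) - ∑ k ∈ Finset.range t, (B ^ k) *ᵥ b) s : ℝ) : EReal)) t
          ≤ ((-g t : ℝ) : EReal) := by
        intro t
        have h1 : (-((B ^ t) *ᵥ z) - ∑ k ∈ Finset.range t, (B ^ k) *ᵥ b) s ≤ -g t := by
          have h2 : 0 ≤ ((B ^ t) *ᵥ z) s := by
            rw [Matrix.mulVec, dotProduct]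
            exact Finset.sum_nonneg fun j _ => mul_nonneg (pow_entry_nonneg B hBnn t s j) (hz j)
          have h3 : (∑ k ∈ Finset.range t, (B ^ k) *ᵥ b) s = g t := by
            simp [hg, Finset.sum_apply]
          simp only [Pi.sub_apply, Pi.neg_apply, h3]
          linarith
        exact EReal.coe_le_coe_iff.mpr h1
      have hliminf_le : liminf (fun t => (((-((B ^ t) *ᵥ z) - ∑ k ∈ Finset.range t, (B ^ k) *ᵥ b) s : ℝ) : EReal)) atTop
          ≤ liminf (fun t => ((-g t : ℝ) : EReal)) atTop :=
        liminf_le_liminf (Eventually.of_forall hle)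
      rw [hcoe.liminf_eq] at hliminf_le
      exact absurd (lt_of_lt_of_le hL hliminf_le) (lt_irrefl _)
    obtain ⟨C, hC⟩ := hBA
    refine summable_of_sum_range_le (c := C) (fun k => hBkb k s) fun t => ?_
    exact hC (Set.mem_range_self t)
  set v : S → ℝ := fun s => ∑' k, ((B ^ k) *ᵥ b) s with hv
  have hvub : ∀ k s, ((B ^ k) *ᵥ b) s ≤ v s := fun k s =>
    Summable.le_tsum (hsum s) k fun i _ => hBkb i s
  -- positivity of v
  have hvpos : ∀ s, 0 < v s := by
    intro s
    -- find k with (P^k *ᵥ q) s > 0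
    have hPkq : ∀ k, 0 ≤ ((P ^ k) *ᵥ q) s := by
      intro k
      rw [Matrix.mulVec, dotProduct]
      exact Finset.sum_nonneg fun j _ => mul_nonneg (pow_entry_nonneg P hPnn k s j) (hq0 j)
    have hkey : ∃ k, 0 < ((P ^ k) *ᵥ q) s := by
      by_contra hno
      push_neg at hno
      have hzero : ∀ k, ((P ^ k) *ᵥ q) s = 0 := fun k => le_antisymm (hno k) (hPkq k)
      have hone : ∀ k, ((P ^ k) *ᵥ fun _ => (1 : ℝ)) s = 1 := by
        intro k
        induction k with
        | zero => simp [Matrix.one_mulVec]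
        | succ k ih =>
          have h1 : ((P ^ k) *ᵥ q) s
              = ((P ^ k) *ᵥ fun _ => (1:ℝ)) s - ((P ^ (k+1)) *ᵥ fun _ => (1:ℝ)) s := by
            have : q = (fun _ => (1:ℝ)) - (P *ᵥ fun _ => (1:ℝ)) := by
              funext j; simp [hqdef, Matrix.sub_mulVec, Matrix.one_mulVec]
            rw [this, Matrix.mulVec_sub]
            simp [Matrix.mulVec_mulVec, pow_succ]
          have := hzero k
          rw [h1] at this
          rw [ih] at this
          linarith
      have htend : Tendsto (fun k => ((P ^ k) *ᵥ fun _ => (1:ℝ)) s) atTop (𝓝 0) := by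
        have : ∀ k, ((P ^ k) *ᵥ fun _ => (1:ℝ)) s = ∑ j, (P ^ k) s j := by
          intro k; simp [Matrix.mulVec, dotProduct]
        simp_rw [this]
        have := tendsto_finset_sum (Finset.univ : Finset S)
          (fun j _ => entries_tendsto_zero_of_specRad P hρP s j)
        simpa using this
      simp_rw [hone] at htend
      have := tendsto_nhds_unique htend tendsto_const_nhds
      norm_num at this
    obtain ⟨k, hk⟩ := hkey
    have hlow : cl ^ (k+1) * ((P ^ k) *ᵥ q) s ≤ ((B ^ k) *ᵥ b) s := by
      rw [Matrix.mulVec, Matrix.mulVec, dotProduct, dotProduct, Finset.mul_sum]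
      refine Finset.sum_le_sum fun j _ => ?_
      have h1 : cl ^ k * (P ^ k) s j ≤ (B ^ k) s j := by
        have hle : ∀ i i', (cl • P) i i' ≤ B i i' := by
          intro i i'; simpa using hBl i i'
        have hnn : ∀ i i', 0 ≤ (cl • P) i i' := by
          intro i i'; simpa using mul_nonneg hcl.le (hPnn i i')
        have := pow_entrywise_le hnn hle k s j
        rwa [smul_pow, Matrix.smul_apply, smul_eq_mul] at this
      have h2 : cl * q j ≤ b j := hbl j
      calc cl ^ (k+1) * ((P ^ k) s j * q j)
          = (cl ^ k * (P ^ k) s j) * (cl * q j) := by ring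
        _ ≤ (B ^ k) s j * b j :=
            mul_le_mul h1 h2 (mul_nonneg hcl.le (hq0 j))
              (le_trans (mul_nonneg (by positivity) (pow_entry_nonneg P hPnn k s j)) h1)
    have : 0 < cl ^ (k+1) * ((P ^ k) *ᵥ q) s := by positivity
    exact lt_of_lt_of_le this (le_trans hlow (hvub k s))
  -- fixed point equation
  have hfix : B *ᵥ v = fun s => v s - b s := by
    funext s
    have hterm : ∀ j : S, Summable fun k => B s j * ((B ^ k) *ᵥ b) j :=
      fun j => (hsum j).mul_left _
    have h1 : (B *ᵥ v) s = ∑ j, ∑' k, B s j * ((B ^ k) *ᵥ b) j := by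
      rw [Matrix.mulVec, dotProduct]
      congr 1
      funext j
      exact (_root_.tsum_mul_left).symm
    have h2 : ∑ j, ∑' k, B s j * ((B ^ k) *ᵥ b) j
        = ∑' k, ∑ j, B s j * ((B ^ k) *ᵥ b) j :=
      (Summable.tsum_finsetSum fun j _ => hterm j).symm
    have h3 : ∀ k : ℕ, ∑ j, B s j * ((B ^ k) *ᵥ b) j = ((B ^ (k+1)) *ᵥ b) s := by
      intro k
      rw [pow_succ']
      rw [← Matrix.mulVec_mulVec]
      simp [Matrix.mulVec, dotProduct]
    have h5 : v s = ((B ^ 0) *ᵥ b) s + ∑' k, ((B ^ (k+1)) *ᵥ b) s :=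
      Summable.tsum_eq_zero_add (hsum s)
    rw [h1, h2]
    simp_rw [h3]
    have h6 : ((B ^ 0) *ᵥ b) s = b s := by simp [Matrix.one_mulVec]
    rw [h6] at h5
    linarith
  -- B^t v = v - partial sums
  have hBtv : ∀ t, (B ^ t) *ᵥ v = fun s => v s - ∑ k ∈ Finset.range t, ((B ^ k) *ᵥ b) s := by
    intro t
    induction t with
    | zero => funext s; simp [Matrix.one_mulVec]
    | succ t ih =>
      funext s
      rw [pow_succ, ← Matrix.mulVec_mulVec, hfix]
      have hvb : (fun s => v s - b s) = v - b := rfl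
      rw [hvb, Matrix.mulVec_sub, ih]
      simp only [Pi.sub_apply]
      rw [Finset.sum_range_succ]
      ring
  -- entries of B^t tend to zero
  have hent : ∀ i j, Tendsto (fun t => (B ^ t) i j) atTop (𝓝 0) := by
    intro i j
    have hup : Tendsto (fun t => ((B ^ t) *ᵥ v) i) atTop (𝓝 0) := by
      have hps : Tendsto (fun t => ∑ k ∈ Finset.range t, ((B ^ k) *ᵥ b) i) atTop (𝓝 (v i)) :=
        (hsum i).hasSum.tendsto_sum_nat
      have h2 : Tendsto (fun t => v i - ∑ k ∈ Finset.range t, ((B ^ k) *ᵥ b) i) atTop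
          (𝓝 (v i - v i)) := tendsto_const_nhds.sub hps
      rw [sub_self] at h2
      have h3 : ∀ t, ((B ^ t) *ᵥ v) i = v i - ∑ k ∈ Finset.range t, ((B ^ k) *ᵥ b) i :=
        fun t => congrFun (hBtv t) i
      simpa [h3] using h2
    have hsq : Tendsto (fun t => (B ^ t) i j * v j) atTop (𝓝 0) := by
      refine squeeze_zero (fun t => mul_nonneg (pow_entry_nonneg B hBnn t i j) (hvpos j).le)
        (fun t => ?_) hup
      rw [Matrix.mulVec, dotProduct]
      exact Finset.single_le_sum (f := fun l => (B ^ t) i l * v l)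
        (fun l _ => mul_nonneg (pow_entry_nonneg B hBnn t i l) (hvpos l).le) (Finset.mem_univ j)
    have h4 := hsq.mul_const (v j)⁻¹
    simpa [mul_assoc, mul_inv_cancel₀ (ne_of_gt (hvpos j))] using h4
  exact specRad_lt_one_of_entries B hent
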